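/- arXiv:2510.24909 — 2 statements merged into one kernel-verified Lean document; each statement's English description precedes it below -/
import Mathlib

section
/- Trust convergence under sustained cooperation with decaying reputation: let λ₊ ∈ (0,1), δ_R ∈ (0,1), a constant signal s ∈ (0,1), and initial states T⁰ ∈ [0,1], R⁰ ∈ [0,1]. Define the coupled dynamics Rᵗ⁺¹ = (1−δ_R)·Rᵗ and Tᵗ⁺¹ = Tᵗ + λ₊·s·(1−Tᵗ)·(1−Rᵗ). Then Tᵗ is nondecreasing and Tᵗ → 1 as t → ∞. -/
/-- Trust convergence under sustained cooperation with decaying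
reputation: with coupled dynamics `R(t+1) = (1−δ_R)·R t` and
`T(t+1) = T t + λ₊·s·(1−T t)·(1−R t)`, the trust sequence is nondecreasing and
converges to 1. -/
theorem trust_convergence_coupled
    (lamP deltaR s : ℝ)
    (hlP0 : 0 < lamP) (hlP1 : lamP < 1)
    (hd0 : 0 < deltaR) (hd1 : deltaR < 1)
    (hs0 : 0 < s) (hs1 : s < 1)
    (T R : ℕ → ℝ)
    (hT00 : 0 ≤ T 0) (hT01 : T 0 ≤ 1)
    (hR00 : 0 ≤ R 0) (hR01 : R 0 ≤ 1)
    (hRupd : ∀ t : ℕ, R (t + 1) = (1 - deltaR) * R t)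
    (hTupd : ∀ t : ℕ, T (t + 1) = T t + lamP * s * (1 - T t) * (1 - R t)) :
    Monotone T ∧ Filter.Tendsto T Filter.atTop (nhds 1) := by
  have hls0 : 0 < lamP * s := mul_pos hlP0 hs0
  have hls1 : lamP * s < 1 := by nlinarith
  -- R bounds
  have hR : ∀ t, 0 ≤ R t ∧ R t ≤ 1 := by
    intro t
    induction t with
    | zero => exact ⟨hR00, hR01⟩
    | succ n ih =>
      rw [hRupd n]
      constructor
      · exact mul_nonneg (by linarith) ih.1
      · nlinarith [ih.1, ih.2]
  -- T bounds
  have hT : ∀ t, 0 ≤ T t ∧ T t ≤ 1 := by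
    intro t
    induction t with
    | zero => exact ⟨hT00, hT01⟩
    | succ n ih =>
      rw [hTupd n]
      obtain ⟨hR0, hR1⟩ := hR n
      have hprod : 0 ≤ lamP * s * (1 - T n) * (1 - R n) :=
        mul_nonneg (mul_nonneg hls0.le (by linarith [ih.2])) (by linarith)
      have hfac : 0 ≤ (1 - T n) * (1 - lamP * s * (1 - R n)) := by
        apply mul_nonneg (by linarith [ih.2])
        nlinarith
      constructor
      · linarith [ih.1]
      · nlinarith
  have hmono : Monotone T := by
    apply monotone_nat_of_le_succ
    intro n
    rw [hTupd n]
    have : 0 ≤ lamP * s * (1 - T n) * (1 - R n) :=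
      mul_nonneg (mul_nonneg hls0.le (by linarith [(hT n).2])) (by linarith [(hR n).2])
    linarith
  refine ⟨hmono, ?_⟩
  -- for t ≥ 1, R t ≤ 1 - deltaR
  have hRle : ∀ t, R (t + 1) ≤ 1 - deltaR := by
    intro t
    rw [hRupd t]
    nlinarith [(hR t).1, (hR t).2]
  set q : ℝ := 1 - lamP * s * deltaR with hq
  have hq0 : 0 ≤ q := by nlinarith
  have hq1 : q < 1 := by nlinarith
  -- key contraction for t ≥ 1
  have hkey : ∀ n, 1 - T (n + 2) ≤ q * (1 - T (n + 1)) := by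
    intro n
    rw [hTupd (n + 1)]
    have h1 := hRle n
    have h2 := (hR (n + 1)).1
    have h3 := (hT (n + 1)).1
    have h4 := (hT (n + 1)).2
    nlinarith [mul_le_mul_of_nonneg_left (show deltaR ≤ 1 - R (n+1) by linarith)
      (mul_nonneg hls0.le (by linarith : (0:ℝ) ≤ 1 - T (n+1)))]
  have hgeo : ∀ n, 1 - T (n + 1) ≤ q ^ n * (1 - T 1) := by
    intro n
    induction n with
    | zero => simp
    | succ m ih =>
      calc 1 - T (m + 2) ≤ q * (1 - T (m + 1)) := hkey m
        _ ≤ q * (q ^ m * (1 - T 1)) := by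
            apply mul_le_mul_of_nonneg_left ih hq0
        _ = q ^ (m + 1) * (1 - T 1) := by ring
  have htendzero : Filter.Tendsto (fun n => 1 - T (n + 1)) Filter.atTop (nhds 0) := by
    apply squeeze_zero (fun n => by linarith [(hT (n + 1)).2]) hgeo
    have := (tendsto_pow_atTop_nhds_zero_of_lt_one hq0 hq1).mul_const (1 - T 1)
    simpa using this
  have h1 : Filter.Tendsto (fun n => T (n + 1)) Filter.atTop (nhds 1) := by
    have := (tendsto_const_nhds (x := (1:ℝ)) (f := Filter.atTop (α := ℕ))).sub htendzero
    simpa using this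
  exact (Filter.tendsto_add_atTop_iff_nat 1).mp h1
end

section
/- Hysteresis (damaged relationships recover strictly slower): let λ₊ ∈ (0,1), δ_R ∈ (0,1), a constant cooperation signal s ∈ (0,1), and a common initial trust T⁰ ∈ [0,1). Consider a pristine trajectory with Rₚᵗ = 0 for all t and Tₚᵗ⁺¹ = Tₚᵗ + λ₊·s·(1−Tₚᵗ), and a damaged trajectory with R_dᵗ = (1−δ_R)ᵗ·R✶ for some R✶ ∈ (0,1] and T_dᵗ⁺¹ = T_dᵗ + λ₊·s·(1−T_dᵗ)·(1−R_dᵗ), both starting at T⁰. Then T_dᵗ < Tₚᵗ for every t ≥ 1. -/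
/-- Hysteresis — damaged relationships recover strictly slower:
under sustained cooperation with constant signal `s ∈ (0,1)`, the pristine
trajectory (reputation 0) strictly dominates, at every `t ≥ 1`, the damaged
trajectory whose reputation is `(1−δ_R)^t · R⋆` with `R⋆ ∈ (0,1]`, both starting
from the same initial trust `T⁰ ∈ [0,1)`. -/
theorem hysteresis_damaged_recovers_slower
    (lamP deltaR s Rstar T0 : ℝ)
    (hlP0 : 0 < lamP) (hlP1 : lamP < 1)
    (hd0 : 0 < deltaR) (hd1 : deltaR < 1)
    (hs0 : 0 < s) (hs1 : s < 1)
    (hRs0 : 0 < Rstar) (hRs1 : Rstar ≤ 1)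
    (hT00 : 0 ≤ T0) (hT01 : T0 < 1)
    (Tp Td : ℕ → ℝ)
    (hTp0 : Tp 0 = T0) (hTd0 : Td 0 = T0)
    (hTpupd : ∀ t : ℕ, Tp (t + 1) = Tp t + lamP * s * (1 - Tp t))
    (hTdupd : ∀ t : ℕ,
      Td (t + 1) = Td t + lamP * s * (1 - Td t) * (1 - (1 - deltaR) ^ t * Rstar)) :
    ∀ t : ℕ, 1 ≤ t → Td t < Tp t := by
  have hls0 : 0 < lamP * s := mul_pos hlP0 hs0
  have hls1 : lamP * s < 1 := by nlinarith
  have key : ∀ t : ℕ, Td t < 1 ∧ Tp t < 1 ∧ Td t ≤ Tp t ∧ (1 ≤ t → Td t < Tp t) := by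
    intro t
    induction t with
    | zero =>
      refine ⟨by rw [hTd0]; exact hT01, by rw [hTp0]; exact hT01,
        by rw [hTp0, hTd0], by omega⟩
    | succ n ih =>
      obtain ⟨hd1', hp1', hle, _⟩ := ih
      have hr0 : 0 < (1 - deltaR) ^ n * Rstar :=
        mul_pos (pow_pos (by linarith) n) hRs0
      have hr1 : (1 - deltaR) ^ n * Rstar ≤ 1 := by
        have h1 : (1 - deltaR) ^ n ≤ 1 :=
          pow_le_one₀ (by linarith) (by linarith)
        nlinarith
      have hstep : Td (n + 1) < Tp (n + 1) := by
        rw [hTdupd n, hTpupd n]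
        nlinarith [mul_pos hls0 (by linarith : (0:ℝ) < 1 - Td n)]
      refine ⟨?_, ?_, le_of_lt hstep, fun _ => hstep⟩
      · rw [hTdupd n]
        nlinarith [mul_nonneg (mul_nonneg hls0.le (by linarith : (0:ℝ) ≤ 1 - Td n)) hr0.le,
          mul_pos (by linarith : (0:ℝ) < 1 - lamP * s) (by linarith : (0:ℝ) < 1 - Td n)]
      · rw [hTpupd n]; nlinarith
  exact fun t ht => (key t).2.2.2 ht
end
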